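/- arXiv:2509.07251 — 2 statements merged into one kernel-verified Lean document; each statement's English description precedes it below -/
import Mathlib

section
/- Let L : H → G be bounded linear, bounded below, with ‖L‖ ≤ 1, let γ > 0, and let A, B be strictly positive on G. Then d_H(L ⊙_γ A, L ⊙_γ B) ≤ d_G(A, B), where L ⊙_γ B = (L ⊡_{1/γ} B⁻¹)⁻¹ is the resolvent composition, L ⊡_μ C = L* ∘ (C⁻¹ + μ(Id_G − L L*))⁻¹ ∘ L, and d is the Thompson metric. -/
open ContinuousLinearMap MeasureTheory

noncomputable section

variable {E : Type*} [NormedAddCommGroup E] [InnerProductSpace ℝ E] [CompleteSpace E]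
variable {H G : Type*} [NormedAddCommGroup H] [InnerProductSpace ℝ H] [CompleteSpace H]
  [NormedAddCommGroup G] [InnerProductSpace ℝ G] [CompleteSpace G]

/-- Löwner partial order: `A ≼ B` iff `B - A` is a positive operator. -/
def Loewner (A B : E →L[ℝ] E) : Prop := (B - A).IsPositive

/-- Strictly positive operators: `α • Id ≼ A` for some `α > 0`. -/
def StrictlyPos (A : E →L[ℝ] E) : Prop :=
  IsSelfAdjoint A ∧ ∃ α : ℝ, 0 < α ∧ Loewner (α • (1 : E →L[ℝ] E)) A

/-- Bounded below linear operator. -/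
def BoundedBelow (L : H →L[ℝ] G) : Prop := ∃ β : ℝ, 0 < β ∧ ∀ x : H, β * ‖x‖ ≤ ‖L x‖

/-- Resolvent cocomposition `L ⊡_γ B = L* ∘ (B⁻¹ + γ(Id − L L*))⁻¹ ∘ L`. -/
def rcc (L : H →L[ℝ] G) (γ : ℝ) (B : G →L[ℝ] G) : H →L[ℝ] H :=
  (adjoint L) ∘L (Ring.inverse (Ring.inverse B + γ • ((1 : G →L[ℝ] G) - L ∘L adjoint L))) ∘L L

/-- Resolvent composition `L ⊙_γ B = (L ⊡_{1/γ} B⁻¹)⁻¹`. -/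
def rc (L : H →L[ℝ] G) (γ : ℝ) (B : G →L[ℝ] G) : H →L[ℝ] H :=
  Ring.inverse (rcc L (1/γ) (Ring.inverse B))

/-- Parallel composition `L* ▸ B = (L* ∘ B⁻¹ ∘ L)⁻¹`. -/
def parallelComp (L : H →L[ℝ] G) (B : G →L[ℝ] G) : H →L[ℝ] H :=
  Ring.inverse ((adjoint L) ∘L (Ring.inverse B) ∘L L)

/-- `g(A,B) = inf {λ > 0 : A ≼ λ B}`. -/
def gThomp (A B : E →L[ℝ] E) : ℝ := sInf {l : ℝ | 0 < l ∧ Loewner A (l • B)}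

/-- Thompson metric. -/
def dThomp (A B : E →L[ℝ] E) : ℝ := Real.log (max (gThomp A B) (gThomp B A))

/-- The (unique) positive square root of a positive operator. -/
def opSqrt (A : E →L[ℝ] E) : E →L[ℝ] E :=
  letI := Classical.propDecidable
  if h : ∃ S : E →L[ℝ] E, S.IsPositive ∧ S * S = A then h.choose else 0

/-- Real power `A^t` of a strictly positive operator, `t ∈ (0,1)`, via the
Balakrishnan integral formula `A^t = (sin (π t)/π) ∫₀^∞ s^{t-1} A (A + s)⁻¹ ds`. -/
def opRpow (A : E →L[ℝ] E) (t : ℝ) : E →L[ℝ] E :=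
  (Real.sin (Real.pi * t) / Real.pi) •
    ∫ s in Set.Ioi (0 : ℝ), s ^ (t - 1) • (A * Ring.inverse (A + s • (1 : E →L[ℝ] E)))

/-- Geometric mean `A # B = A^{1/2} (A^{-1/2} B A^{-1/2})^{1/2} A^{1/2}`. -/
def geomMean (A B : E →L[ℝ] E) : E →L[ℝ] E :=
  opSqrt A * opSqrt (Ring.inverse (opSqrt A) * B * Ring.inverse (opSqrt A)) * opSqrt A

/-- `t`-weighted geometric mean `A #_t B = A^{1/2} (A^{-1/2} B A^{-1/2})^t A^{1/2}`. -/
def wGeomMean (t : ℝ) (A B : E →L[ℝ] E) : E →L[ℝ] E :=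
  opSqrt A * opRpow (Ring.inverse (opSqrt A) * B * Ring.inverse (opSqrt A)) t * opSqrt A

section ThompsonAux

local notation "⟪" x ", " y "⟫" => @inner ℝ _ _ x y

private lemma isPos_iff' {T : E →L[ℝ] E} :
    T.IsPositive ↔ IsSelfAdjoint T ∧ ∀ x, 0 ≤ ⟪T x, x⟫ := by
  constructor
  · rintro ⟨h1, h2⟩
    exact ⟨ContinuousLinearMap.isSelfAdjoint_iff_isSymmetric.2 h1, fun x => by simpa [ContinuousLinearMap.reApplyInnerSelf] using h2 x⟩
  · rintro ⟨h1, h2⟩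
    exact ⟨ContinuousLinearMap.isSelfAdjoint_iff_isSymmetric.1 h1, fun x => by simpa [ContinuousLinearMap.reApplyInnerSelf] using h2 x⟩

private lemma loewner_of {A B : E →L[ℝ] E} (h1 : IsSelfAdjoint A) (h2 : IsSelfAdjoint B)
    (h : ∀ x, ⟪A x, x⟫ ≤ ⟪B x, x⟫) : Loewner A B := by
  rw [Loewner, isPos_iff']
  refine ⟨h2.sub h1, fun x => ?_⟩
  have := h x
  simp only [ContinuousLinearMap.sub_apply, inner_sub_left, sub_nonneg]
  exact this

private lemma loewner_inner {A B : E →L[ℝ] E} (h : Loewner A B) (x : E) :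
    ⟪A x, x⟫ ≤ ⟪B x, x⟫ := by
  have := (isPos_iff'.1 h).2 x
  simpa [ContinuousLinearMap.sub_apply, inner_sub_left, sub_nonneg] using this

private lemma sa_smul_one (c : ℝ) : IsSelfAdjoint (c • (1 : E →L[ℝ] E)) :=
  (IsSelfAdjoint.all c).smul (IsSelfAdjoint.one _)

private lemma sp_quad {A : E →L[ℝ] E} (hA : StrictlyPos A) :
    ∃ α : ℝ, 0 < α ∧ ∀ x, α * ‖x‖ ^ 2 ≤ ⟪A x, x⟫ := by
  obtain ⟨hsa, α, hα, hLw⟩ := hA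
  refine ⟨α, hα, fun x => ?_⟩
  have := loewner_inner hLw x
  simpa [ContinuousLinearMap.smul_apply, ContinuousLinearMap.one_apply,
    real_inner_smul_left, real_inner_self_eq_norm_sq] using this

private lemma sp_isPositive {A : E →L[ℝ] E} (hA : StrictlyPos A) : A.IsPositive := by
  obtain ⟨α, hα, hq⟩ := sp_quad hA
  exact isPos_iff'.2 ⟨hA.1, fun x => le_trans (by positivity) (hq x)⟩

private lemma sp_isUnit {A : E →L[ℝ] E} (hA : StrictlyPos A) : IsUnit A := by
  obtain ⟨α, hα, hq⟩ := sp_quad hA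
  refine isUnit_of_forall_le_norm_inner_map A (c := α.toNNReal) (by simpa using hα) fun x => ?_
  have h1 := hq x
  have h2 : α * ‖x‖ ^ 2 ≤ ‖⟪A x, x⟫‖ := le_trans h1 (le_abs_self _)
  calc ‖x‖ ^ 2 * (α.toNNReal : ℝ) = α * ‖x‖ ^ 2 := by
        rw [Real.coe_toNNReal _ hα.le]; ring
    _ ≤ ‖⟪A x, x⟫‖ := h2

private lemma rinv_eq {R : Type*} [MonoidWithZero R] {a b : R}
    (h1 : a * b = 1) (h2 : b * a = 1) : Ring.inverse a = b := by
  have hu : IsUnit a := isUnit_iff_exists.2 ⟨b, h1, h2⟩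
  calc Ring.inverse a = Ring.inverse a * (a * b) := by rw [h1, mul_one]
    _ = Ring.inverse a * a * b := by rw [mul_assoc]
    _ = b := by rw [Ring.inverse_mul_cancel _ hu, one_mul]

private lemma rinv_rinv {A : E →L[ℝ] E} (hu : IsUnit A) :
    Ring.inverse (Ring.inverse A) = A :=
  rinv_eq (Ring.inverse_mul_cancel _ hu) (Ring.mul_inverse_cancel _ hu)

private lemma apply_rinv {A : E →L[ℝ] E} (hu : IsUnit A) (x : E) :
    A (Ring.inverse A x) = x := by
  have h := Ring.mul_inverse_cancel A hu
  calc A (Ring.inverse A x) = (A * Ring.inverse A) x := rfl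
    _ = x := by rw [h]; rfl

private lemma sa_rinv {A : E →L[ℝ] E} (hsa : IsSelfAdjoint A) (hu : IsUnit A) :
    IsSelfAdjoint (Ring.inverse A) := by
  have h1 : star A * star (Ring.inverse A) = 1 := by
    rw [← star_mul, Ring.inverse_mul_cancel _ hu, star_one]
  have h2 : star (Ring.inverse A) * star A = 1 := by
    rw [← star_mul, Ring.mul_inverse_cancel _ hu, star_one]
  have h3 : Ring.inverse (star A) = star (Ring.inverse A) := rinv_eq h1 h2
  show star (Ring.inverse A) = Ring.inverse A
  rw [← h3, hsa.star_eq]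

private lemma sp_rinv {A : E →L[ℝ] E} (hA : StrictlyPos A) :
    StrictlyPos (Ring.inverse A) := by
  obtain ⟨α, hα, hq⟩ := sp_quad hA
  have hu := sp_isUnit hA
  have hsa := sa_rinv hA.1 hu
  refine ⟨hsa, α / (‖A‖ + 1) ^ 2, by positivity, ?_⟩
  refine loewner_of (sa_smul_one _) hsa fun x => ?_
  set y := Ring.inverse A x with hy
  have hAy : A y = x := apply_rinv hu x
  have h1 : α * ‖y‖ ^ 2 ≤ ⟪A y, y⟫ := hq y
  have h2 : ⟪A y, y⟫ = ⟪Ring.inverse A x, x⟫ := by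
    rw [hAy, ← hy]; exact real_inner_comm y x
  have hnorm : ‖x‖ ≤ (‖A‖ + 1) * ‖y‖ := by
    calc ‖x‖ = ‖A y‖ := by rw [hAy]
      _ ≤ ‖A‖ * ‖y‖ := A.le_opNorm y
      _ ≤ (‖A‖ + 1) * ‖y‖ := by nlinarith [norm_nonneg y]
  have hc : (0:ℝ) < (‖A‖ + 1) ^ 2 := by positivity
  have hx2 : ‖x‖ ^ 2 ≤ (‖A‖ + 1) ^ 2 * ‖y‖ ^ 2 := by
    nlinarith [norm_nonneg x, norm_nonneg y]
  have goal1 : α / (‖A‖ + 1) ^ 2 * ‖x‖ ^ 2 ≤ ⟪Ring.inverse A x, x⟫ := by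
    calc α / (‖A‖ + 1) ^ 2 * ‖x‖ ^ 2
        ≤ α / (‖A‖ + 1) ^ 2 * ((‖A‖ + 1) ^ 2 * ‖y‖ ^ 2) := by
          apply mul_le_mul_of_nonneg_left hx2 (by positivity)
      _ = α * ‖y‖ ^ 2 := by field_simp
      _ ≤ ⟪A y, y⟫ := h1
      _ = ⟪Ring.inverse A x, x⟫ := h2
  simpa [ContinuousLinearMap.smul_apply, ContinuousLinearMap.one_apply,
    real_inner_smul_left, real_inner_self_eq_norm_sq] using goal1

private lemma inv_quad_bound {A : E →L[ℝ] E} (hA : StrictlyPos A) (x y : E) :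
    2 * ⟪x, y⟫ - ⟪A y, y⟫ ≤ ⟪Ring.inverse A x, x⟫ := by
  have hu := sp_isUnit hA
  have hsym : ∀ u v : E, ⟪A u, v⟫ = ⟪u, A v⟫ := fun u v => by
    conv_lhs => rw [← hA.1.adjoint_eq]
    exact ContinuousLinearMap.adjoint_inner_left A v u
  set z := Ring.inverse A x with hz
  have hAz : A z = x := apply_rinv hu x
  have hpos : 0 ≤ ⟪A (y - z), y - z⟫ := (isPos_iff'.1 (sp_isPositive hA)).2 _
  have expand : ⟪A (y - z), y - z⟫ = ⟪A y, y⟫ - 2 * ⟪x, y⟫ + ⟪z, x⟫ := by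
    have h1 : A (y - z) = A y - x := by rw [map_sub, hAz]
    rw [h1, inner_sub_left, inner_sub_right, inner_sub_right]
    have e1 : ⟪A y, z⟫ = ⟪x, y⟫ := by
      rw [hsym y z, hAz]; exact real_inner_comm x y
    have e2 : ⟪x, z⟫ = ⟪z, x⟫ := real_inner_comm z x
    rw [e1, e2]; ring
  rw [expand] at hpos
  linarith

private lemma loewner_rinv {A B : E →L[ℝ] E} (hA : StrictlyPos A) (hB : StrictlyPos B)
    (h : Loewner A B) : Loewner (Ring.inverse B) (Ring.inverse A) := by
  have huB := sp_isUnit hB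
  refine loewner_of (sa_rinv hB.1 huB) (sa_rinv hA.1 (sp_isUnit hA)) fun x => ?_
  set y := Ring.inverse B x with hy
  have hBy : B y = x := apply_rinv huB x
  have key := inv_quad_bound hA x y
  have hle := loewner_inner h y
  have e1 : ⟪B y, y⟫ = ⟪x, y⟫ := by rw [hBy]
  have e2 : ⟪Ring.inverse B x, x⟫ = ⟪x, y⟫ := by rw [← hy]; exact real_inner_comm x y
  linarith

end ThompsonAux
section ThompsonAux2

local notation "⟪" x ", " y "⟫" => @inner ℝ _ _ x y

private lemma isPos_smul {c : ℝ} (hc : 0 ≤ c) {P : E →L[ℝ] E} (hP : P.IsPositive) :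
    (c • P).IsPositive := by
  refine isPos_iff'.2 ⟨(IsSelfAdjoint.all c).smul hP.isSelfAdjoint, fun x => ?_⟩
  have := (isPos_iff'.1 hP).2 x
  simp only [ContinuousLinearMap.smul_apply, real_inner_smul_left]
  exact mul_nonneg hc this

private lemma loewner_trans {A B C : E →L[ℝ] E} (h1 : Loewner A B) (h2 : Loewner B C) :
    Loewner A C := by
  rw [Loewner, show C - A = (C - B) + (B - A) by abel]
  exact h2.add h1

private lemma loewner_smul {c : ℝ} (hc : 0 ≤ c) {A B : E →L[ℝ] E} (h : Loewner A B) :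
    Loewner (c • A) (c • B) := by
  rw [Loewner, ← smul_sub]
  exact isPos_smul hc h

private lemma sp_smul {c : ℝ} (hc : 0 < c) {A : E →L[ℝ] E} (hA : StrictlyPos A) :
    StrictlyPos (c • A) := by
  obtain ⟨hsa, α, hα, hLw⟩ := hA
  refine ⟨(IsSelfAdjoint.all c).smul hsa, c * α, by positivity, ?_⟩
  have := loewner_smul hc.le hLw
  rwa [smul_smul] at this

set_option synthInstance.maxHeartbeats 1000000 in
private lemma rinv_smul {c : ℝ} (hc : c ≠ 0) {A : E →L[ℝ] E} (hu : IsUnit A) :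
    Ring.inverse (c • A) = c⁻¹ • Ring.inverse A := by
  apply rinv_eq
  · rw [smul_mul_assoc, mul_smul_comm, smul_smul, mul_inv_cancel₀ hc, one_smul,
      Ring.mul_inverse_cancel _ hu]
  · rw [smul_mul_assoc, mul_smul_comm, smul_smul, inv_mul_cancel₀ hc, one_smul,
      Ring.inverse_mul_cancel _ hu]

private lemma sp_add_pos {A P : E →L[ℝ] E} (hA : StrictlyPos A) (hP : P.IsPositive) :
    StrictlyPos (A + P) := by
  obtain ⟨hsa, α, hα, hLw⟩ := hA
  refine ⟨hsa.add hP.isSelfAdjoint, α, hα, loewner_of (sa_smul_one _) (hsa.add hP.isSelfAdjoint) fun x => ?_⟩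
  have h1 := loewner_inner hLw x
  have h2 := (isPos_iff'.1 hP).2 x
  simp only [ContinuousLinearMap.add_apply, inner_add_left]
  linarith

private lemma M_pos (L : H →L[ℝ] G) (hL1 : ‖L‖ ≤ 1) {μ : ℝ} (hμ : 0 ≤ μ) :
    (μ • ((1 : G →L[ℝ] G) - L ∘L ContinuousLinearMap.adjoint L)).IsPositive := by
  apply isPos_smul hμ
  refine isPos_iff'.2 ⟨?_, fun x => ?_⟩
  · have hsa : IsSelfAdjoint (L ∘L ContinuousLinearMap.adjoint L) := by
      show star _ = _
      rw [ContinuousLinearMap.star_eq_adjoint, ContinuousLinearMap.adjoint_comp,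
        ContinuousLinearMap.adjoint_adjoint]
    exact (IsSelfAdjoint.one _).sub hsa
  · set u := ContinuousLinearMap.adjoint L x with hu
    have e1 : ⟪(L ∘L ContinuousLinearMap.adjoint L) x, x⟫ = ‖u‖ ^ 2 := by
      show ⟪L u, x⟫ = ‖u‖ ^ 2
      rw [← ContinuousLinearMap.adjoint_inner_right L u x, ← hu,
        real_inner_self_eq_norm_sq]
    have e2 : ‖u‖ ^ 2 = ⟪x, L u⟫ := by
      rw [← real_inner_self_eq_norm_sq, hu, ContinuousLinearMap.adjoint_inner_right]
      exact (real_inner_comm _ _)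
    have hb : ‖u‖ ^ 2 ≤ ‖x‖ * (‖L‖ * ‖u‖) := by
      calc ‖u‖ ^ 2 = ⟪x, L u⟫ := e2
        _ ≤ ‖x‖ * ‖L u‖ := real_inner_le_norm x (L u)
        _ ≤ ‖x‖ * (‖L‖ * ‖u‖) := by
            have := L.le_opNorm u
            exact mul_le_mul_of_nonneg_left this (norm_nonneg x)
    have hb3 : ‖u‖ ^ 2 ≤ ‖x‖ * ‖u‖ := by
      have h6 : ‖L‖ * ‖u‖ ≤ ‖u‖ := mul_le_of_le_one_left (norm_nonneg u) hL1
      nlinarith [norm_nonneg x]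
    have hun : ‖u‖ ≤ ‖x‖ := by
      rcases (norm_nonneg u).eq_or_lt' with h0 | h0
      · rw [h0]; exact norm_nonneg x
      · nlinarith [hb3, h0]
    simp only [ContinuousLinearMap.sub_apply, ContinuousLinearMap.one_apply,
      inner_sub_left, e1, real_inner_self_eq_norm_sq]
    nlinarith [norm_nonneg u, norm_nonneg x]

private lemma conj_sp (L : H →L[ℝ] G) (hL : BoundedBelow L) {R : G →L[ℝ] G}
    (hR : StrictlyPos R) :
    StrictlyPos (ContinuousLinearMap.adjoint L ∘L R ∘L L) := by
  obtain ⟨β, hβ, hLb⟩ := hL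
  obtain ⟨c, hc, hq⟩ := sp_quad hR
  have hpos : (ContinuousLinearMap.adjoint L ∘L R ∘L L).IsPositive :=
    (sp_isPositive hR).adjoint_conj L
  refine ⟨hpos.isSelfAdjoint, c * β ^ 2, by positivity,
    loewner_of (sa_smul_one _) hpos.isSelfAdjoint fun x => ?_⟩
  have h1 : ⟪ContinuousLinearMap.adjoint L (R (L x)), x⟫ = ⟪R (L x), L x⟫ :=
    ContinuousLinearMap.adjoint_inner_left L x (R (L x))
  have h2 := hq (L x)
  have h3 := hLb x
  have h4 : (β * ‖x‖) ^ 2 ≤ ‖L x‖ ^ 2 := by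
    have hb0 : 0 ≤ β * ‖x‖ := by positivity
    nlinarith
  have h5 : c * β ^ 2 * ‖x‖ ^ 2 ≤ ⟪R (L x), L x⟫ := by nlinarith
  simp only [ContinuousLinearMap.smul_apply, ContinuousLinearMap.one_apply,
    ContinuousLinearMap.comp_apply, real_inner_smul_left, real_inner_self_eq_norm_sq]
  rw [h1]
  linarith

end ThompsonAux2
section ThompsonAux3

local notation "⟪" x ", " y "⟫" => @inner ℝ _ _ x y

private lemma rc_eq (L : H →L[ℝ] G) (γ : ℝ) {A : G →L[ℝ] G} (hu : IsUnit A) :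
    rc L γ A = Ring.inverse (ContinuousLinearMap.adjoint L ∘L
      Ring.inverse (A + (1/γ) • ((1 : G →L[ℝ] G) - L ∘L ContinuousLinearMap.adjoint L)) ∘L L) := by
  rw [rc, rcc, rinv_rinv hu]

private lemma rc_loewner (L : H →L[ℝ] G) (hL : BoundedBelow L) (hL1 : ‖L‖ ≤ 1)
    {γ : ℝ} (hγ : 0 < γ) {A B : G →L[ℝ] G} (hA : StrictlyPos A) (hB : StrictlyPos B)
    {l : ℝ} (hl : 1 ≤ l) (h : Loewner A (l • B)) :
    Loewner (rc L γ A) (l • rc L γ B) := by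
  set M := (1/γ) • ((1 : G →L[ℝ] G) - L ∘L ContinuousLinearMap.adjoint L) with hM
  have hMpos : M.IsPositive := M_pos L hL1 (by positivity)
  have hAM : StrictlyPos (A + M) := sp_add_pos hA hMpos
  have hBM : StrictlyPos (B + M) := sp_add_pos hB hMpos
  have hl0 : (0:ℝ) < l := lt_of_lt_of_le one_pos hl
  have hlBM : StrictlyPos (l • (B + M)) := sp_smul hl0 hBM
  have step0 : Loewner (A + M) (l • (B + M)) := by
    rw [Loewner, show l • (B + M) - (A + M) = (l • B - A) + (l - 1) • M by
      rw [smul_add]; module]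
    exact (h : (l • B - A).IsPositive).add (isPos_smul (by linarith) hMpos)
  have step1 := loewner_rinv hAM hlBM step0
  rw [rinv_smul (ne_of_gt hl0) (sp_isUnit hBM)] at step1
  have step2 : Loewner
      (ContinuousLinearMap.adjoint L ∘L (l⁻¹ • Ring.inverse (B + M)) ∘L L)
      (ContinuousLinearMap.adjoint L ∘L Ring.inverse (A + M) ∘L L) := by
    rw [Loewner] at step1 ⊢
    have h2 := step1.adjoint_conj L
    convert h2 using 1
    rw [ContinuousLinearMap.sub_comp, ContinuousLinearMap.comp_sub]
  have e : ContinuousLinearMap.adjoint L ∘L (l⁻¹ • Ring.inverse (B + M)) ∘L L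
      = l⁻¹ • (ContinuousLinearMap.adjoint L ∘L Ring.inverse (B + M) ∘L L) := by
    rw [ContinuousLinearMap.smul_comp, ContinuousLinearMap.comp_smul]
  rw [e] at step2
  have hTA : StrictlyPos (ContinuousLinearMap.adjoint L ∘L Ring.inverse (A + M) ∘L L) :=
    conj_sp L hL (sp_rinv hAM)
  have hTB : StrictlyPos (ContinuousLinearMap.adjoint L ∘L Ring.inverse (B + M) ∘L L) :=
    conj_sp L hL (sp_rinv hBM)
  have step3 := loewner_rinv (sp_smul (inv_pos.2 hl0) hTB) hTA step2
  rw [rinv_smul (inv_ne_zero (ne_of_gt hl0)) (sp_isUnit hTB), inv_inv] at step3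
  rw [rc_eq L γ (sp_isUnit hA), rc_eq L γ (sp_isUnit hB)]
  exact step3

private lemma loewner_le_norm {A : E →L[ℝ] E} (hsa : IsSelfAdjoint A) :
    Loewner A (‖A‖ • (1 : E →L[ℝ] E)) := by
  refine loewner_of hsa (sa_smul_one _) fun x => ?_
  have h1 : ⟪A x, x⟫ ≤ ‖A x‖ * ‖x‖ := real_inner_le_norm _ _
  have h2 : ‖A x‖ ≤ ‖A‖ * ‖x‖ := A.le_opNorm x
  have : ⟪A x, x⟫ ≤ ‖A‖ * ‖x‖ ^ 2 := by nlinarith [norm_nonneg x, norm_nonneg (A x)]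
  simpa [ContinuousLinearMap.smul_apply, ContinuousLinearMap.one_apply,
    real_inner_smul_left, real_inner_self_eq_norm_sq] using this

private lemma gset_nonempty {A B : G →L[ℝ] G} (hA : StrictlyPos A) (hB : StrictlyPos B) :
    {l : ℝ | 0 < l ∧ Loewner A (l • B)}.Nonempty := by
  obtain ⟨hsaB, β, hβ, hLwB⟩ := hB
  refine ⟨(‖A‖ + 1) / β, by positivity, ?_⟩
  have h1 : Loewner A (‖A‖ • (1 : G →L[ℝ] G)) := loewner_le_norm hA.1
  have h2 : Loewner (‖A‖ • (1 : G →L[ℝ] G)) ((‖A‖ + 1) • (1 : G →L[ℝ] G)) := by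
    rw [Loewner, show (‖A‖ + 1) • (1 : G →L[ℝ] G) - ‖A‖ • 1 = (1:ℝ) • (1 : G →L[ℝ] G) by module]
    exact isPos_smul zero_le_one ContinuousLinearMap.isPositive_one
  have h3 : Loewner ((‖A‖ + 1) • (1 : G →L[ℝ] G)) (((‖A‖ + 1) / β) • B) := by
    have h4 := loewner_smul (c := (‖A‖ + 1) / β) (by positivity) hLwB
    rwa [smul_smul, div_mul_cancel₀ _ (ne_of_gt hβ)] at h4
  exact loewner_trans (loewner_trans h1 h2) h3

private lemma gset_bddBelow (A B : G →L[ℝ] G) :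
    BddBelow {l : ℝ | 0 < l ∧ Loewner A (l • B)} :=
  ⟨0, fun _ hx => hx.1.le⟩

private lemma gThomp_nonneg (A B : G →L[ℝ] G) : 0 ≤ gThomp A B :=
  Real.sInf_nonneg fun _ hx => hx.1.le

private lemma one_le_thomp_max [Nontrivial G] {A B : G →L[ℝ] G}
    (hA : StrictlyPos A) (hB : StrictlyPos B) :
    1 ≤ max (gThomp A B) (gThomp B A) := by
  by_contra hcon
  push_neg at hcon
  rw [max_lt_iff] at hcon
  obtain ⟨h1, h2⟩ := hcon
  rw [gThomp] at h1 h2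
  obtain ⟨l, hlmem, hl1⟩ := exists_lt_of_csInf_lt (gset_nonempty hA hB) h1
  obtain ⟨k, hkmem, hk1⟩ := exists_lt_of_csInf_lt (gset_nonempty hB hA) h2
  obtain ⟨α, hα, hq⟩ := sp_quad hA
  obtain ⟨x0, hx0⟩ := exists_ne (0 : G)
  have hn0 : (0:ℝ) < ‖x0‖ := norm_pos_iff.2 hx0
  have hAx : 0 < ⟪A x0, x0⟫ := lt_of_lt_of_le (by positivity) (hq x0)
  have e1 : ⟪A x0, x0⟫ ≤ l * ⟪B x0, x0⟫ := by
    have := loewner_inner hlmem.2 x0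
    simpa [ContinuousLinearMap.smul_apply, real_inner_smul_left] using this
  have e2 : ⟪B x0, x0⟫ ≤ k * ⟪A x0, x0⟫ := by
    have := loewner_inner hkmem.2 x0
    simpa [ContinuousLinearMap.smul_apply, real_inner_smul_left] using this
  have hl0 := hlmem.1
  have hk0 := hkmem.1
  have e3 : l * ⟪B x0, x0⟫ ≤ l * (k * ⟪A x0, x0⟫) :=
    mul_le_mul_of_nonneg_left e2 hl0.le
  have e4 : l * k < 1 := by nlinarith
  nlinarith [e3, e4, hAx, e1]

end ThompsonAux3
section ThompsonAux4

local notation "⟪" x ", " y "⟫" => @inner ℝ _ _ x y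

private lemma dThomp_subsingleton' [Subsingleton E] (A B : E →L[ℝ] E) :
    dThomp A B = 0 := by
  have hpos : ∀ T : E →L[ℝ] E, T.IsPositive := fun T => by
    refine isPos_iff'.2 ⟨?_, fun x => ?_⟩
    · show star T = T
      ext x
      exact Subsingleton.elim _ _
    · rw [Subsingleton.elim x 0]
      simp
  have hg : ∀ X Y : E →L[ℝ] E, gThomp X Y = 0 := fun X Y => by
    rw [gThomp]
    have hset : {l : ℝ | 0 < l ∧ Loewner X (l • Y)} = Set.Ioi 0 := by
      ext l
      simp only [Set.mem_setOf_eq, Set.mem_Ioi, and_iff_left_iff_imp]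
      exact fun _ => hpos _
    rw [hset, csInf_Ioi]
  simp [dThomp, hg]

private lemma g_rc_le (L : H →L[ℝ] G) (hL : BoundedBelow L) (hL1 : ‖L‖ ≤ 1)
    {γ : ℝ} (hγ : 0 < γ) {A B : G →L[ℝ] G} (hA : StrictlyPos A) (hB : StrictlyPos B)
    (hm : 1 ≤ max (gThomp A B) (gThomp B A)) :
    gThomp (rc L γ A) (rc L γ B) ≤ max (gThomp A B) (gThomp B A) := by
  set m := max (gThomp A B) (gThomp B A) with hmdef
  have key : ∀ ε : ℝ, 0 < ε → gThomp (rc L γ A) (rc L γ B) ≤ m + ε := by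
    intro ε hε
    have hlt : sInf {l : ℝ | 0 < l ∧ Loewner A (l • B)} < m + ε := by
      have : gThomp A B ≤ m := le_max_left _ _
      rw [gThomp] at this
      linarith
    obtain ⟨l, hlmem, hl⟩ := exists_lt_of_csInf_lt (gset_nonempty hA hB) hlt
    set l' := max l 1 with hl'def
    have hl'1 : 1 ≤ l' := le_max_right _ _
    have hl'0 : 0 < l' := lt_of_lt_of_le one_pos hl'1
    have hAB' : Loewner A (l' • B) := by
      refine loewner_trans hlmem.2 ?_
      rw [Loewner, show l' • B - l • B = (l' - l) • B by module]
      exact isPos_smul (sub_nonneg.2 (le_max_left l 1)) (sp_isPositive hB)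
    have hrc := rc_loewner L hL hL1 hγ hA hB hl'1 hAB'
    have hmem : l' ∈ {c : ℝ | 0 < c ∧ Loewner (rc L γ A) (c • rc L γ B)} := ⟨hl'0, hrc⟩
    have hle : gThomp (rc L γ A) (rc L γ B) ≤ l' := by
      rw [gThomp]
      exact csInf_le (gset_bddBelow _ _) hmem
    have hle2 : l' ≤ m + ε := max_le hl.le (by linarith)
    linarith
  by_contra hcon
  push_neg at hcon
  have := key ((gThomp (rc L γ A) (rc L γ B) - m) / 2) (by linarith)
  linarith

end ThompsonAux4
theorem rc_thompson_nonexpansive (L : H →L[ℝ] G) (hL : BoundedBelow L)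
    (hL1 : ‖L‖ ≤ 1) (γ : ℝ) (hγ : 0 < γ)
    (A B : G →L[ℝ] G) (hA : StrictlyPos A) (hB : StrictlyPos B) :
    dThomp (rc L γ A) (rc L γ B) ≤ dThomp A B := by
  rcases subsingleton_or_nontrivial G with hG | hG
  · have hH : Subsingleton H := by
      by_contra hns
      rw [not_subsingleton_iff_nontrivial] at hns
      obtain ⟨β, hβ, hq⟩ := hL
      obtain ⟨x, hx⟩ := exists_ne (0 : H)
      have h1 := hq x
      rw [Subsingleton.elim (L x) 0, norm_zero] at h1
      have h2 : (0:ℝ) < ‖x‖ := norm_pos_iff.2 hx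
      nlinarith
    rw [dThomp_subsingleton' (rc L γ A) (rc L γ B), dThomp_subsingleton' A B]
  · have hm : 1 ≤ max (gThomp A B) (gThomp B A) := one_le_thomp_max hA hB
    have hg1 : gThomp (rc L γ A) (rc L γ B) ≤ max (gThomp A B) (gThomp B A) :=
      g_rc_le L hL hL1 hγ hA hB hm
    have hg2 : gThomp (rc L γ B) (rc L γ A) ≤ max (gThomp A B) (gThomp B A) := by
      have hm' : 1 ≤ max (gThomp B A) (gThomp A B) := by rwa [max_comm]
      have := g_rc_le L hL hL1 hγ hB hA hm'
      rwa [max_comm (gThomp B A)] at this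
    have hmaxle : max (gThomp (rc L γ A) (rc L γ B)) (gThomp (rc L γ B) (rc L γ A))
        ≤ max (gThomp A B) (gThomp B A) := max_le hg1 hg2
    rw [dThomp, dThomp]
    rcases eq_or_lt_of_le (le_max_of_le_left (gThomp_nonneg (rc L γ A) (rc L γ B))) with h0 | h0
    · rw [← h0, Real.log_zero]
      exact Real.log_nonneg hm
    · exact Real.log_le_log h0 hmaxle
end
end

section
/- Let L : H → G be an isometry (L* ∘ L = Id_H) between real Hilbert spaces, let B be strictly positive on G, and let γ > 0. Define ℒ_{1/γ}(L,B) = (L* ∘ (B + γ⁻¹Id_G) ∘ L) # (L* ∘ (B + γ⁻¹Id_G)⁻¹ ∘ L)⁻¹ − γ⁻¹Id_H, where A # C = A^{1/2}(A^{−1/2} C A^{−1/2})^{1/2} A^{1/2} is the geometric mean. Then L ⊡_γ B ≼ ℒ_{1/γ}(L,B) ≼ L* ∘ B ∘ L, where L ⊡_γ B = L* ∘ (B⁻¹ + γ(Id_G − L L*))⁻¹ ∘ L. -/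
open ContinuousLinearMap MeasureTheory

noncomputable section

variable {E : Type*} [NormedAddCommGroup E] [InnerProductSpace ℝ E] [CompleteSpace E]
variable {H G : Type*} [NormedAddCommGroup H] [InnerProductSpace ℝ H] [CompleteSpace H]
  [NormedAddCommGroup G] [InnerProductSpace ℝ G] [CompleteSpace G]

namespace GeomAux

local notation "⟪" x ", " y "⟫" => @inner ℝ _ _ x y

variable {A B C T S V P Q : E →L[ℝ] E}

set_option linter.unusedSectionVars false
set_option maxHeartbeats 1000000
set_option synthInstance.maxHeartbeats 200000

lemma isPositive_iff' (T : E →L[ℝ] E) :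
    T.IsPositive ↔ IsSelfAdjoint T ∧ ∀ x, 0 ≤ ⟪T x, x⟫ := by
  simp only [ContinuousLinearMap.IsPositive, ContinuousLinearMap.reApplyInnerSelf_apply,
    RCLike.re_to_real, ← isSelfAdjoint_iff_isSymmetric]

lemma symm_inner (hT : IsSelfAdjoint T) (x y : E) : ⟪T x, y⟫ = ⟪x, T y⟫ :=
  ((isSelfAdjoint_iff_isSymmetric).mp hT) x y

lemma loewner_iff : Loewner A B ↔ IsSelfAdjoint (B - A) ∧ ∀ x, 0 ≤ ⟪B x, x⟫ - ⟪A x, x⟫ := by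
  rw [Loewner, isPositive_iff']
  simp [inner_sub_left]

lemma loewner_of (hA : IsSelfAdjoint A) (hB : IsSelfAdjoint B)
    (h : ∀ x, ⟪A x, x⟫ ≤ ⟪B x, x⟫) : Loewner A B :=
  loewner_iff.mpr ⟨hB.sub hA, fun x => by linarith [h x]⟩

lemma loewner_inner_le (h : Loewner A B) (x : E) : ⟪A x, x⟫ ≤ ⟪B x, x⟫ := by
  linarith [(loewner_iff.mp h).2 x]

lemma loewner_selfAdjoint_sub (h : Loewner A B) : IsSelfAdjoint (B - A) :=
  (loewner_iff.mp h).1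

lemma loewner_trans (hA : IsSelfAdjoint A) (hB : IsSelfAdjoint B) (hC : IsSelfAdjoint C)
    (h1 : Loewner A B) (h2 : Loewner B C) : Loewner A C :=
  loewner_of hA hC fun x => le_trans (loewner_inner_le h1 x) (loewner_inner_le h2 x)

lemma smul_one_inner (c : ℝ) (x : E) : ⟪(c • (1 : E →L[ℝ] E)) x, x⟫ = c * ‖x‖ ^ 2 := by
  simp [real_inner_smul_left, real_inner_self_eq_norm_sq]

/-- Cauchy–Schwarz for a positive operator. -/
lemma cs (hT : T.IsPositive) (x y : E) : ⟪T x, y⟫ ^ 2 ≤ ⟪T x, x⟫ * ⟪T y, y⟫ := by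
  obtain ⟨hsa, hpos⟩ := (isPositive_iff' T).mp hT
  have key : ∀ t : ℝ, 0 ≤ ⟪T y, y⟫ * (t * t) + (2 * ⟪T x, y⟫) * t + ⟪T x, x⟫ := by
    intro t
    have h0 := hpos (x + t • y)
    have e1 : ⟪T (x + t • y), x + t • y⟫
        = ⟪T x, x⟫ + t * ⟪T x, y⟫ + t * ⟪T y, x⟫ + t * t * ⟪T y, y⟫ := by
      simp [_root_.map_add, _root_.map_smul, inner_add_left, inner_add_right, real_inner_smul_left,
        real_inner_smul_right]
      ring
    have e2 : ⟪T y, x⟫ = ⟪T x, y⟫ := by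
      rw [symm_inner hsa y x, real_inner_comm]
    rw [e1, e2] at h0
    nlinarith [h0]
  have hd := discrim_le_zero key
  unfold discrim at hd
  nlinarith [hd]

lemma sa_smul_one (c : ℝ) : IsSelfAdjoint (c • (1 : E →L[ℝ] E)) := by
  rw [IsSelfAdjoint, star_smul, star_trivial, star_one]

lemma inner_abs_le_of_sa (hV : IsSelfAdjoint V) (β : ℝ) (hβ : 0 ≤ β)
    (h : ∀ x, |⟪V x, x⟫| ≤ β * ‖x‖ ^ 2) : ‖V‖ ≤ β := by
  have key : ∀ x y : E, 4 * ⟪V x, y⟫ ≤ 2 * β * (‖x‖ ^ 2 + ‖y‖ ^ 2) := by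
    intro x y
    have e1 : ⟪V (x + y), x + y⟫ - ⟪V (x - y), x - y⟫ = 4 * ⟪V x, y⟫ := by
      have hyx : ⟪V y, x⟫ = ⟪V x, y⟫ := by
        rw [symm_inner hV y x, real_inner_comm]
      simp only [_root_.map_add, _root_.map_sub, inner_add_left, inner_add_right, inner_sub_left,
        inner_sub_right]
      linarith [hyx]
    have h1 := (abs_le.mp (h (x + y))).2
    have h2 := (abs_le.mp (h (x - y))).1
    have hp : ‖x + y‖ ^ 2 + ‖x - y‖ ^ 2 = 2 * (‖x‖ ^ 2 + ‖y‖ ^ 2) := by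
      have := norm_add_sq_real x y
      have := norm_sub_sq_real x y
      linarith
    nlinarith
  refine V.opNorm_le_bound hβ fun x => ?_
  rcases eq_or_ne ‖V x‖ 0 with h0 | h0
  · rw [h0]; positivity
  have hx : x ≠ 0 := by
    intro h'; apply h0; simp [h']
  have hxn : 0 < ‖x‖ := norm_pos_iff.mpr hx
  have hVx : 0 < ‖V x‖ := lt_of_le_of_ne (norm_nonneg _) (Ne.symm h0)
  have := key x ((‖x‖ / ‖V x‖) • V x)
  rw [real_inner_smul_right] at this
  have hinner : ⟪V x, V x⟫ = ‖V x‖ ^ 2 := real_inner_self_eq_norm_sq _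
  rw [hinner] at this
  have hny : ‖(‖x‖ / ‖V x‖) • V x‖ = ‖x‖ := by
    rw [norm_smul]
    rw [Real.norm_eq_abs, abs_of_nonneg (le_of_lt (div_pos hxn hVx))]
    field_simp
  rw [hny] at this
  have h4 : ‖x‖ / ‖V x‖ * ‖V x‖ ^ 2 = ‖x‖ * ‖V x‖ := by
    field_simp
  rw [h4] at this
  nlinarith
lemma norm_le_of_loewner_pm (hV : IsSelfAdjoint V) (β : ℝ) (hβ : 0 ≤ β)
    (h1 : Loewner ((-β) • (1 : E →L[ℝ] E)) V) (h2 : Loewner V (β • (1 : E →L[ℝ] E))) :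
    ‖V‖ ≤ β := by
  refine inner_abs_le_of_sa hV β hβ fun x => abs_le.mpr ⟨?_, ?_⟩
  · have := loewner_inner_le h1 x
    rw [smul_one_inner] at this; linarith
  · have := loewner_inner_le h2 x
    rw [smul_one_inner] at this; linarith

lemma inner_le_norm_op (V : E →L[ℝ] E) (x : E) : ⟪V x, x⟫ ≤ ‖V‖ * ‖x‖ ^ 2 := by
  calc ⟪V x, x⟫ ≤ ‖V x‖ * ‖x‖ := real_inner_le_norm _ _
  _ ≤ ‖V‖ * ‖x‖ * ‖x‖ := by
      have := V.le_opNorm x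
      nlinarith [norm_nonneg x]
  _ = ‖V‖ * ‖x‖ ^ 2 := by ring

lemma loewner_norm_smul_one (hV : IsSelfAdjoint V) : Loewner V (‖V‖ • (1 : E →L[ℝ] E)) :=
  loewner_of hV (sa_smul_one _) fun x => by
    rw [smul_one_inner]; exact inner_le_norm_op V x

lemma strict_inner (h : StrictlyPos A) : ∃ α : ℝ, 0 < α ∧ ∀ x, α * ‖x‖ ^ 2 ≤ ⟪A x, x⟫ := by
  obtain ⟨hsa, α, hα, hlo⟩ := h
  exact ⟨α, hα, fun x => by have := loewner_inner_le hlo x; rwa [smul_one_inner] at this⟩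

lemma strictlyPos_of_inner (hsa : IsSelfAdjoint A) {α : ℝ} (hα : 0 < α)
    (h : ∀ x, α * ‖x‖ ^ 2 ≤ ⟪A x, x⟫) : StrictlyPos A :=
  ⟨hsa, α, hα, loewner_of (sa_smul_one α) hsa fun x => by rw [smul_one_inner]; exact h x⟩

lemma strictlyPos_isPositive (h : StrictlyPos A) : A.IsPositive := by
  obtain ⟨α, hα, hin⟩ := strict_inner h
  exact (isPositive_iff' A).mpr ⟨h.1, fun x => le_trans (by positivity) (hin x)⟩

lemma isUnit_of_strictlyPos (h : StrictlyPos A) : IsUnit A := by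
  rcases subsingleton_or_nontrivial E with hE | hE
  · have : Subsingleton (E →L[ℝ] E) := ⟨fun f g => ContinuousLinearMap.ext fun x =>
      Subsingleton.elim _ _⟩
    exact isUnit_of_subsingleton A
  obtain ⟨α, hα, hin⟩ := strict_inner h
  set n := ‖A‖ with hn
  have hAn : ∀ x, ⟪A x, x⟫ ≤ n * ‖x‖ ^ 2 := fun x => inner_le_norm_op A x
  obtain ⟨x0, hx0⟩ := exists_ne (0 : E)
  have hx0n : 0 < ‖x0‖ := norm_pos_iff.mpr hx0
  have hαn : α ≤ n := by
    have h1 := hin x0; have h2 := hAn x0; nlinarith [pow_pos hx0n 2]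
  have hnpos : 0 < n := lt_of_lt_of_le hα hαn
  set c : ℝ := 2 / (α + n) with hc
  have hcpos : 0 < c := by positivity
  set V := 1 - c • A with hV
  have hcA : IsSelfAdjoint (c • A) := by
    rw [IsSelfAdjoint, star_smul, star_trivial, h.1.star_eq]
  have hVsa : IsSelfAdjoint V := (IsSelfAdjoint.one (E →L[ℝ] E)).sub hcA
  have hs : (0:ℝ) < α + n := by linarith
  have hVnorm : ‖V‖ < 1 := by
    have hr : (n - α) / (α + n) < 1 := by
      rw [div_lt_one hs]; linarith
    have hb : ‖V‖ ≤ (n - α) / (α + n) := by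
      refine inner_abs_le_of_sa hVsa _ (div_nonneg (by linarith) (by linarith)) fun x => ?_
      have e : ⟪V x, x⟫ = ‖x‖ ^ 2 - c * ⟪A x, x⟫ := by
        simp [hV, inner_sub_left, real_inner_smul_left, real_inner_self_eq_norm_sq]
      have e' : ⟪V x, x⟫ * (α + n) = (α + n) * ‖x‖ ^ 2 - 2 * ⟪A x, x⟫ := by
        rw [e, hc]; field_simp
      have hb1 : ((α - n) * ‖x‖ ^ 2) / (α + n) ≤ ⟪V x, x⟫ := by
        rw [div_le_iff₀ hs, e']
        have := hAn x; linarith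
      have hb2 : ⟪V x, x⟫ ≤ ((n - α) * ‖x‖ ^ 2) / (α + n) := by
        rw [le_div_iff₀ hs, e']
        have := hin x; linarith
      refine abs_le.mpr ⟨?_, ?_⟩
      · calc -((n - α) / (α + n) * ‖x‖ ^ 2) = ((α - n) * ‖x‖ ^ 2) / (α + n) := by ring
          _ ≤ ⟪V x, x⟫ := hb1
      · calc ⟪V x, x⟫ ≤ ((n - α) * ‖x‖ ^ 2) / (α + n) := hb2
          _ = (n - α) / (α + n) * ‖x‖ ^ 2 := by ring
    linarith
  have hu : IsUnit (c • A) := by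
    have h1 : IsUnit ((1 : E →L[ℝ] E) - V) := (Units.oneSub V hVnorm).isUnit
    have he : (1 : E →L[ℝ] E) - V = c • A := by rw [hV]; abel
    rwa [he] at h1
  rw [Algebra.smul_def] at hu
  have hcu : IsUnit ((algebraMap ℝ (E →L[ℝ] E)) c) :=
    (isUnit_iff_ne_zero.mpr (ne_of_gt hcpos)).map (algebraMap ℝ (E →L[ℝ] E))
  obtain ⟨u, huu⟩ := hcu
  have : A = ↑u⁻¹ * ((algebraMap ℝ (E →L[ℝ] E)) c * A) := by
    rw [← mul_assoc, ← huu, Units.inv_mul, one_mul]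
  rw [this]
  exact (u⁻¹).isUnit.mul hu

lemma inverse_sa (hA : IsSelfAdjoint A) (hu : IsUnit A) :
    IsSelfAdjoint (Ring.inverse A) := by
  have h1 := Ring.mul_inverse_cancel A hu
  have h2 := Ring.inverse_mul_cancel A hu
  have hst : star (Ring.inverse A) * A = 1 := by
    calc star (Ring.inverse A) * A = star (star A * Ring.inverse A) := by
          rw [star_mul, star_star]
      _ = star (A * Ring.inverse A) := by rw [hA.star_eq]
      _ = 1 := by rw [h1, star_one]
  have : star (Ring.inverse A) = Ring.inverse A := by
    calc star (Ring.inverse A) = star (Ring.inverse A) * (A * Ring.inverse A) := by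
          rw [h1, mul_one]
      _ = (star (Ring.inverse A) * A) * Ring.inverse A := by rw [mul_assoc]
      _ = Ring.inverse A := by rw [hst, one_mul]
  exact this

lemma inverse_strictlyPos (h : StrictlyPos A) : StrictlyPos (Ring.inverse A) := by
  rcases subsingleton_or_nontrivial E with hE | hE
  · refine ⟨?_, 1, one_pos, ?_⟩
    · exact inverse_sa h.1 (isUnit_of_strictlyPos h)
    · refine loewner_of (sa_smul_one 1) (inverse_sa h.1 (isUnit_of_strictlyPos h)) fun x => ?_
      rw [Subsingleton.elim x 0]; simp
  obtain ⟨α, hα, hin⟩ := strict_inner h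
  have hu := isUnit_of_strictlyPos h
  set b := Ring.inverse A with hb
  have hbsa : IsSelfAdjoint b := inverse_sa h.1 hu
  have hAb : ∀ x, A (b x) = x := fun x => by
    have := Ring.mul_inverse_cancel A hu
    calc A (b x) = (A * b) x := rfl
      _ = x := by rw [this]; rfl
  have hApos : 0 < ‖A‖ := by
    rcases eq_or_lt_of_le (norm_nonneg A) with h0 | h0
    · exfalso
      obtain ⟨x0, hx0⟩ := exists_ne (0 : E)
      have : A = 0 := by rw [← norm_eq_zero]; exact h0.symm
      have h1 := hAb x0
      rw [this] at h1
      simp at h1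
      exact hx0 h1.symm
    · exact h0
  refine strictlyPos_of_inner hbsa (α := α / ‖A‖ ^ 2) (by positivity) fun x => ?_
  have e1 : ⟪A (b x), b x⟫ = ⟪b x, x⟫ := by
    rw [real_inner_comm, hAb x]
  have e2 : α * ‖b x‖ ^ 2 ≤ ⟪A (b x), b x⟫ := hin (b x)
  have e3 : ‖x‖ ≤ ‖A‖ * ‖b x‖ := by
    conv_lhs => rw [← hAb x]
    exact A.le_opNorm (b x)
  have : ‖x‖ ^ 2 ≤ ‖A‖ ^ 2 * ‖b x‖ ^ 2 := by nlinarith [norm_nonneg x, norm_nonneg (b x)]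
  rw [← e1]
  rw [div_mul_eq_mul_div, div_le_iff₀ (by positivity)]
  nlinarith

lemma isPositive_smul_nonneg {c : ℝ} (hc : 0 ≤ c) (hS : S.IsPositive) :
    (c • S).IsPositive := by
  obtain ⟨hsa, hpos⟩ := (isPositive_iff' S).mp hS
  refine (isPositive_iff' _).mpr ⟨?_, fun x => ?_⟩
  · rw [IsSelfAdjoint, star_smul, star_trivial, hsa.star_eq]
  · rw [ContinuousLinearMap.smul_apply, real_inner_smul_left]
    exact mul_nonneg hc (hpos x)

lemma sqrt_exists_of_small (X : E →L[ℝ] E) (hX : IsSelfAdjoint X) {r : ℝ}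
    (hr0 : 0 ≤ r) (hr : r < 1) (hXn : ‖X‖ ≤ r) :
    ∃ S : E →L[ℝ] E, S.IsPositive ∧ S * S = 1 - X := by
  set t : ℝ := 1 - Real.sqrt (1 - r) with ht
  have hsq : Real.sqrt (1 - r) ^ 2 = 1 - r := Real.sq_sqrt (by linarith)
  have hsle : Real.sqrt (1 - r) ≤ 1 := by
    nlinarith [Real.sqrt_nonneg (1 - r)]
  have hspos : 0 < Real.sqrt (1 - r) := Real.sqrt_pos.mpr (by linarith)
  have ht0 : 0 ≤ t := by simp only [ht, sub_nonneg]; exact hsle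
  have ht1 : t < 1 := by simp only [ht]; linarith
  have htt : r + t ^ 2 = 2 * t := by
    have : (1 - t) ^ 2 = 1 - r := by rw [ht, sub_sub_cancel]; exact hsq
    nlinarith
  set K : Set (E →L[ℝ] E) := {T | ‖T‖ ≤ t ∧ IsSelfAdjoint T} with hK
  have hKclosed : IsClosed K := by
    apply IsClosed.inter
    · exact isClosed_le continuous_norm continuous_const
    · exact isClosed_eq continuous_star continuous_id
  have h0K : (0 : E →L[ℝ] E) ∈ K := by
    constructor
    · simp [ht0]
    · rw [IsSelfAdjoint, star_zero]
  haveI : Nonempty K := ⟨⟨0, h0K⟩⟩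
  haveI : CompleteSpace K := hKclosed.completeSpace_coe
  have hmem : ∀ T : E →L[ℝ] E, T ∈ K → (2⁻¹ : ℝ) • (X + T * T) ∈ K := by
    intro T hT
    constructor
    · have h1 : ‖(2⁻¹ : ℝ) • (X + T * T)‖ ≤ 2⁻¹ * (‖X‖ + ‖T‖ * ‖T‖) := by
        rw [norm_smul ((2:ℝ)⁻¹) (X + T * T)]
        have := norm_add_le X (T * T)
        have := norm_mul_le T T
        simp only [norm_inv, Real.norm_ofNat]
        have h2 : ‖X + T * T‖ ≤ ‖X‖ + ‖T‖ * ‖T‖ := by linarith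
        nlinarith [norm_nonneg (X + T * T)]
      have h2 : ‖T‖ * ‖T‖ ≤ t * t := mul_le_mul hT.1 hT.1 (norm_nonneg T) ht0
      calc ‖(2⁻¹ : ℝ) • (X + T * T)‖ ≤ 2⁻¹ * (‖X‖ + ‖T‖ * ‖T‖) := h1
        _ ≤ 2⁻¹ * (r + t * t) := by nlinarith
        _ = t := by nlinarith [htt]
    · rw [IsSelfAdjoint, star_smul, star_trivial, star_add, star_mul, hX.star_eq,
        hT.2.star_eq]
  set f : K → K := fun T => ⟨(2⁻¹ : ℝ) • (X + T.1 * T.1), hmem T.1 T.2⟩ with hf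
  have hlip : LipschitzWith ⟨t, ht0⟩ f := by
    apply LipschitzWith.of_dist_le_mul
    rintro ⟨T, hT⟩ ⟨T', hT'⟩
    simp only [hf, Subtype.dist_eq, dist_eq_norm]
    have e : (2⁻¹ : ℝ) • (X + T * T) - (2⁻¹ : ℝ) • (X + T' * T')
        = (2⁻¹ : ℝ) • (T * (T - T') + (T - T') * T') := by
      rw [← smul_sub]
      congr 1
      rw [mul_sub, sub_mul]
      abel
    rw [e, norm_smul ((2:ℝ)⁻¹) (T * (T - T') + (T - T') * T')]
    have h1 : ‖T * (T - T') + (T - T') * T'‖ ≤ ‖T‖ * ‖T - T'‖ + ‖T - T'‖ * ‖T'‖ :=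
      le_trans (norm_add_le _ _) (add_le_add (norm_mul_le _ _) (norm_mul_le _ _))
    have h2 : ‖T‖ ≤ t := hT.1
    have h3 : ‖T'‖ ≤ t := hT'.1
    simp only [norm_inv, Real.norm_ofNat]
    change 2⁻¹ * ‖T * (T - T') + (T - T') * T'‖ ≤ t * ‖T - T'‖
    nlinarith [norm_nonneg (T - T'), norm_nonneg T, norm_nonneg T']
  have hcontr : ContractingWith ⟨t, ht0⟩ f := ⟨by exact_mod_cast ht1, hlip⟩
  set Tfix := hcontr.fixedPoint f with hTfix
  have hfixed : f Tfix = Tfix := hcontr.fixedPoint_isFixedPt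
  set T : E →L[ℝ] E := Tfix.1 with hT
  have hTK : T ∈ K := Tfix.2
  have hfix : (2⁻¹ : ℝ) • (X + T * T) = T := congrArg Subtype.val hfixed
  have h2T : X + T * T = (2 : ℝ) • T := by
    calc X + T * T = (2 : ℝ) • ((2⁻¹ : ℝ) • (X + T * T)) := by
          rw [smul_smul]; norm_num
      _ = (2 : ℝ) • T := by rw [hfix]
  have hT2 : T * T = (2 : ℝ) • T - X := by rw [← h2T]; abel
  refine ⟨1 - T, ?_, ?_⟩
  · refine (isPositive_iff' _).mpr ⟨?_, fun x => ?_⟩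
    · exact (IsSelfAdjoint.one _).sub hTK.2
    · have h1 : ⟪T x, x⟫ ≤ ‖T‖ * ‖x‖ ^ 2 := inner_le_norm_op T x
      have h2 : ‖T‖ ≤ t := hTK.1
      have e : ⟪((1 : E →L[ℝ] E) - T) x, x⟫ = ‖x‖ ^ 2 - ⟪T x, x⟫ := by
        simp [inner_sub_left, real_inner_self_eq_norm_sq]
      rw [e]
      nlinarith [sq_nonneg ‖x‖]
  · rw [sub_mul, mul_sub, mul_sub, hT2]
    simp only [one_mul, mul_one]
    rw [two_smul]
    abel

lemma exists_posRoot (h : StrictlyPos A) : ∃ S : E →L[ℝ] E, S.IsPositive ∧ S * S = A := by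
  rcases eq_or_lt_of_le (norm_nonneg A) with h0 | hApos
  · have hA0 : A = 0 := by rw [← norm_eq_zero]; exact h0.symm
    exact ⟨0, isPositive_zero, by rw [hA0]; simp⟩
  obtain ⟨α, hα, hin⟩ := strict_inner h
  have hAne : A ≠ 0 := by
    intro h'; rw [h'] at hApos; simp at hApos
  set n := ‖A‖ with hn
  obtain ⟨x0, hx0⟩ : ∃ x, A x ≠ 0 := by
    by_contra h'
    push_neg at h'
    exact hAne (ContinuousLinearMap.ext fun x => by rw [h' x]; rfl)
  have hx0ne : x0 ≠ 0 := fun h' => hx0 (by rw [h']; simp)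
  have hx0n : 0 < ‖x0‖ := norm_pos_iff.mpr hx0ne
  have hαn : α ≤ n := by
    have h1 := hin x0
    have h2 := inner_le_norm_op A x0
    nlinarith [pow_pos hx0n 2]
  set X : E →L[ℝ] E := 1 - n⁻¹ • A with hX
  have hXsa : IsSelfAdjoint X := by
    have : IsSelfAdjoint (n⁻¹ • A) := by
      rw [IsSelfAdjoint, star_smul, star_trivial, h.1.star_eq]
    exact (IsSelfAdjoint.one _).sub this
  have hXnorm : ‖X‖ ≤ 1 - α / n := by
    refine inner_abs_le_of_sa hXsa _ ?_ fun x => ?_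
    · have : α / n ≤ 1 := by rw [div_le_one hApos]; exact hαn
      linarith
    · have e : ⟪X x, x⟫ = ‖x‖ ^ 2 - n⁻¹ * ⟪A x, x⟫ := by
        simp [hX, inner_sub_left, real_inner_smul_left, real_inner_self_eq_norm_sq]
      have hninv : (0 : ℝ) ≤ n⁻¹ := inv_nonneg.mpr hApos.le
      have hup : n⁻¹ * ⟪A x, x⟫ ≤ ‖x‖ ^ 2 := by
        have h2 := inner_le_norm_op A x
        have h3 := mul_le_mul_of_nonneg_left h2 hninv
        have h4 : n⁻¹ * (n * ‖x‖ ^ 2) = ‖x‖ ^ 2 := by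
          field_simp
        linarith
      have hlow : α / n * ‖x‖ ^ 2 ≤ n⁻¹ * ⟪A x, x⟫ := by
        have h3 := mul_le_mul_of_nonneg_left (hin x) hninv
        have h4 : α / n * ‖x‖ ^ 2 = n⁻¹ * (α * ‖x‖ ^ 2) := by
          rw [div_eq_inv_mul]; ring
        linarith
      rw [e, abs_le]
      constructor
      · have hα1 : α / n ≤ 1 := by rw [div_le_one hApos]; exact hαn
        nlinarith [sq_nonneg ‖x‖]
      · nlinarith
  have hr0 : 0 ≤ 1 - α / n := by
    have : α / n ≤ 1 := by rw [div_le_one hApos]; exact hαn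
    linarith
  have hr1 : 1 - α / n < 1 := by
    have : 0 < α / n := div_pos hα hApos
    linarith
  obtain ⟨S', hS'pos, hS'sq⟩ := sqrt_exists_of_small X hXsa hr0 hr1 hXnorm
  have hXe : (1 : E →L[ℝ] E) - X = n⁻¹ • A := by rw [hX]; abel
  refine ⟨Real.sqrt n • S', isPositive_smul_nonneg (Real.sqrt_nonneg n) hS'pos, ?_⟩
  have e1 : (Real.sqrt n • S') * (Real.sqrt n • S')
      = (Real.sqrt n * Real.sqrt n) • (S' * S') := by
    rw [smul_mul_assoc, mul_smul_comm, smul_smul]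
  rw [e1, Real.mul_self_sqrt hApos.le, hS'sq, hXe, smul_smul,
    mul_inv_cancel₀ (ne_of_gt hApos), one_smul]

lemma opSqrt_spec (h : ∃ S : E →L[ℝ] E, S.IsPositive ∧ S * S = A) :
    (opSqrt A).IsPositive ∧ opSqrt A * opSqrt A = A := by
  rw [opSqrt, dif_pos h]
  exact h.choose_spec

lemma commute_inv_of_commute {x y z : E →L[ℝ] E} (h : x * y = y * x)
    (h1 : z * y = 1) (h2 : y * z = 1) : x * z = z * x := by
  have e1 : x * z = z * (y * x * z) := by
    rw [← one_mul (x * z), ← h1]; noncomm_ring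
  rw [e1, ← h, mul_assoc x y z, h2, mul_one]

lemma root_isUnit (hS : S.IsPositive) (hSS : S * S = A) (hA : IsUnit A) : IsUnit S := by
  have h1 : A * Ring.inverse A = 1 := Ring.mul_inverse_cancel A hA
  have h2 : Ring.inverse A * A = 1 := Ring.inverse_mul_cancel A hA
  have hl : (Ring.inverse A * S) * S = 1 := by rw [mul_assoc, hSS]; exact h2
  have hr : S * (S * Ring.inverse A) = 1 := by rw [← mul_assoc, hSS]; exact h1
  have heq : Ring.inverse A * S = S * Ring.inverse A := by
    calc Ring.inverse A * S = (Ring.inverse A * S) * (S * (S * Ring.inverse A)) := by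
          rw [hr, mul_one]
      _ = ((Ring.inverse A * S) * S) * (S * Ring.inverse A) := by
          noncomm_ring
      _ = S * Ring.inverse A := by rw [hl, one_mul]
  exact ⟨⟨S, Ring.inverse A * S, by rw [heq]; exact hr, hl⟩, rfl⟩

lemma root_strictlyPos (hA : StrictlyPos A) (hS : S.IsPositive) (hSS : S * S = A) :
    StrictlyPos S := by
  rcases subsingleton_or_nontrivial E with hE | hE
  · refine ⟨hS.isSelfAdjoint, 1, one_pos, loewner_of (sa_smul_one 1) hS.isSelfAdjoint fun x => ?_⟩
    rw [Subsingleton.elim x 0]; simp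
  obtain ⟨α, hα, hin⟩ := strict_inner hA
  have hSx : ∀ x, α * ‖x‖ ^ 2 ≤ ‖S x‖ ^ 2 := by
    intro x
    have h1 : ⟪A x, x⟫ = ‖S x‖ ^ 2 := by
      rw [← hSS]
      calc ⟪(S * S) x, x⟫ = ⟪S (S x), x⟫ := rfl
        _ = ⟪S x, S x⟫ := by rw [symm_inner hS.isSelfAdjoint (S x) x]
        _ = ‖S x‖ ^ 2 := real_inner_self_eq_norm_sq _
    rw [← h1]; exact hin x
  have hSne : S ≠ 0 := by
    intro h'
    obtain ⟨x0, hx0⟩ := exists_ne (0 : E)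
    have := hSx x0
    rw [h'] at this
    simp at this
    have hx0n : 0 < ‖x0‖ := norm_pos_iff.mpr hx0
    nlinarith [pow_pos hx0n 2]
  have hSn : 0 < ‖S‖ := norm_pos_iff.mpr hSne
  refine strictlyPos_of_inner hS.isSelfAdjoint (α := α / ‖S‖) (by positivity) fun x => ?_
  have hb : (0:ℝ) ≤ ⟪S x, S x⟫ := real_inner_self_nonneg
  have ha : (0:ℝ) ≤ ⟪S x, x⟫ := ((isPositive_iff' S).mp hS).2 x
  have hcs := cs hS x (S x)
  have h2 : ⟪S (S x), S x⟫ ≤ ‖S‖ * ‖S x‖ ^ 2 := inner_le_norm_op S (S x)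
  have h3 : ⟪S x, S x⟫ = ‖S x‖ ^ 2 := real_inner_self_eq_norm_sq _
  rcases eq_or_lt_of_le hb with h0 | h0
  · -- ⟪S x, S x⟫ = 0, then x = 0 essentially
    have : ‖S x‖ ^ 2 = 0 := by rw [← h3, ← h0]
    have hx : α * ‖x‖ ^ 2 ≤ 0 := by rw [← this]; exact hSx x
    have : ‖x‖ ^ 2 ≤ 0 := by nlinarith
    rw [div_mul_eq_mul_div, div_le_iff₀ hSn]
    nlinarith
  · have hb' : 0 < ‖S x‖ ^ 2 := by rw [← h3]; exact h0
    rw [div_mul_eq_mul_div, div_le_iff₀ hSn]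
    have h4 := hSx x
    nlinarith [hcs, h2, h3]

lemma loewner_conj (M : E →L[ℝ] E) (hM : IsSelfAdjoint M) (h : Loewner A B) :
    Loewner (M * A * M) (M * B * M) := by
  have hpos : (B - A).IsPositive := h
  have hc := hpos.adjoint_conj M
  have hMadj : adjoint M = M := ContinuousLinearMap.isSelfAdjoint_iff'.mp hM
  rw [hMadj] at hc
  have e : M ∘L (B - A) ∘L M = M * B * M - M * A * M := by
    show M * ((B - A) * M) = M * B * M - M * A * M
    noncomm_ring
  rw [Loewner]
  rw [← e]
  exact hc

lemma loewner_smul_ones {a b : ℝ} (h : a ≤ b) :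
    Loewner (a • (1 : E →L[ℝ] E)) (b • (1 : E →L[ℝ] E)) :=
  loewner_of (sa_smul_one a) (sa_smul_one b) fun x => by
    rw [smul_one_inner, smul_one_inner]
    nlinarith [sq_nonneg ‖x‖]

lemma norm_le_one_of_le_one (hT : T.IsPositive) (h : Loewner T 1) : ‖T‖ ≤ 1 := by
  refine norm_le_of_loewner_pm hT.isSelfAdjoint 1 zero_le_one ?_ ?_
  · show ((T : E →L[ℝ] E) - (-1 : ℝ) • 1).IsPositive
    have e : T - (-1 : ℝ) • (1 : E →L[ℝ] E) = T + 1 := by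
      rw [neg_smul, one_smul, sub_neg_eq_add]
    rw [e]
    exact hT.add isPositive_one
  · show ((1 : ℝ) • (1 : E →L[ℝ] E) - T).IsPositive
    rw [one_smul]
    exact h

lemma root_le_one (hS : S.IsPositive) (hSS : S * S = T) (hT1 : Loewner T 1)
    (hT : T.IsPositive) : Loewner S 1 := by
  have hTn : ‖T‖ ≤ 1 := norm_le_one_of_le_one hT hT1
  have hSn : ‖S‖ ≤ 1 := by
    have hc : ‖star S * S‖ = ‖S‖ * ‖S‖ := CStarRing.norm_star_mul_self
    rw [hS.isSelfAdjoint.star_eq, hSS] at hc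
    nlinarith [norm_nonneg S]
  have h1 : Loewner S (‖S‖ • 1) := loewner_norm_smul_one hS.isSelfAdjoint
  have h2 : Loewner (‖S‖ • (1 : E →L[ℝ] E)) ((1:ℝ) • 1) := loewner_smul_ones hSn
  rw [one_smul] at h2
  exact loewner_trans hS.isSelfAdjoint (sa_smul_one _) (IsSelfAdjoint.one _) h1 h2

lemma le_root (hS : S.IsPositive) (hSS : S * S = T) (hS1 : Loewner S 1) :
    Loewner T S := by
  have hTsa : IsSelfAdjoint T := by
    rw [← hSS, IsSelfAdjoint, star_mul, hS.isSelfAdjoint.star_eq]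
  refine loewner_of hTsa hS.isSelfAdjoint fun x => ?_
  have e1 : ⟪T x, x⟫ = ⟪S x, S x⟫ := by
    rw [← hSS]
    calc ⟪(S * S) x, x⟫ = ⟪S (S x), x⟫ := rfl
      _ = ⟪S x, S x⟫ := by rw [symm_inner hS.isSelfAdjoint (S x) x]
  have hb : (0:ℝ) ≤ ⟪S x, S x⟫ := real_inner_self_nonneg
  have ha : (0:ℝ) ≤ ⟪S x, x⟫ := ((isPositive_iff' S).mp hS).2 x
  have hcs := cs hS x (S x)
  have h2 : ⟪S (S x), S x⟫ ≤ ⟪S x, S x⟫ := by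
    have := loewner_inner_le hS1 (S x)
    simpa using this
  rw [e1]
  rcases eq_or_lt_of_le hb with h0 | h0
  · rw [← h0]; exact ha
  · nlinarith

lemma one_le_inverse (hV : StrictlyPos V) (hV1 : Loewner V 1) :
    Loewner 1 (Ring.inverse V) := by
  have hVu : IsUnit V := isUnit_of_strictlyPos hV
  have hW : StrictlyPos (Ring.inverse V) := inverse_strictlyPos hV
  set W := Ring.inverse V with hWdef
  obtain ⟨SW, hSWpos, hSWsq⟩ := exists_posRoot hW
  have hVW : V * W = 1 := Ring.mul_inverse_cancel V hVu
  have hWV : W * V = 1 := Ring.inverse_mul_cancel V hVu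
  have hSWW : SW * W = W * SW := by rw [← hSWsq, mul_assoc]
  have hSWV : SW * V = V * SW := commute_inv_of_commute hSWW hVW hWV
  have hconj := loewner_conj SW hSWpos.isSelfAdjoint hV1
  have e1 : SW * V * SW = 1 := by
    rw [hSWV, mul_assoc, hSWsq, hVW]
  have e2 : SW * 1 * SW = W := by rw [mul_one, hSWsq]
  rw [e1, e2] at hconj
  exact hconj

lemma conj_strictlyPos (M : E →L[ℝ] E) (hM : IsSelfAdjoint M) (hMu : IsUnit M)
    (hA : StrictlyPos A) : StrictlyPos (M * A * M) := by
  have hsa : IsSelfAdjoint (M * A * M) := by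
    rw [IsSelfAdjoint, star_mul, star_mul, hM.star_eq, hA.1.star_eq, mul_assoc]
  rcases subsingleton_or_nontrivial E with hE | hE
  · refine ⟨hsa, 1, one_pos, loewner_of (sa_smul_one 1) hsa fun x => ?_⟩
    rw [Subsingleton.elim x 0]; simp
  obtain ⟨α, hα, hin⟩ := strict_inner hA
  set iM := Ring.inverse M with hiM
  have hiMM : iM * M = 1 := Ring.inverse_mul_cancel M hMu
  have hiMne : iM ≠ 0 := by
    intro h'
    have : (1 : E →L[ℝ] E) = 0 := by rw [← hiMM, h', zero_mul]
    obtain ⟨x0, hx0⟩ := exists_ne (0 : E)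
    apply hx0
    calc x0 = (1 : E →L[ℝ] E) x0 := rfl
      _ = (0 : E →L[ℝ] E) x0 := by rw [this]
      _ = 0 := rfl
  have hiMn : 0 < ‖iM‖ := norm_pos_iff.mpr hiMne
  refine strictlyPos_of_inner hsa (α := α / ‖iM‖ ^ 2) (by positivity) fun x => ?_
  have e1 : ⟪(M * A * M) x, x⟫ = ⟪A (M x), M x⟫ := by
    calc ⟪(M * A * M) x, x⟫ = ⟪M (A (M x)), x⟫ := rfl
      _ = ⟪A (M x), M x⟫ := by rw [symm_inner hM (A (M x)) x]
  have e2 : α * ‖M x‖ ^ 2 ≤ ⟪A (M x), M x⟫ := hin (M x)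
  have e3 : ‖x‖ ≤ ‖iM‖ * ‖M x‖ := by
    calc ‖x‖ = ‖iM (M x)‖ := by
          have : iM (M x) = x := by
            calc iM (M x) = (iM * M) x := rfl
              _ = x := by rw [hiMM]; rfl
          rw [this]
      _ ≤ ‖iM‖ * ‖M x‖ := iM.le_opNorm (M x)
  have e4 : ‖x‖ ^ 2 ≤ ‖iM‖ ^ 2 * ‖M x‖ ^ 2 := by nlinarith [norm_nonneg x, norm_nonneg (M x)]
  rw [e1, div_mul_eq_mul_div, div_le_iff₀ (by positivity)]
  nlinarith

lemma inverse_mul3 {M A : E →L[ℝ] E} (hMu : IsUnit M) (hAu : IsUnit A) :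
    Ring.inverse (M * A * M) = Ring.inverse M * Ring.inverse A * Ring.inverse M := by
  obtain ⟨u, hu⟩ := hMu
  obtain ⟨a, ha⟩ := hAu
  rw [← hu, ← ha, ← Units.val_mul, ← Units.val_mul, Ring.inverse_unit, Ring.inverse_unit,
    Ring.inverse_unit, ← Units.val_mul, ← Units.val_mul]
  exact congrArg Units.val (by group)

lemma sandwich {M X : E →L[ℝ] E} (hMu : IsUnit M) :
    M * (Ring.inverse M * X * Ring.inverse M) * M = X := by
  have h1 : M * Ring.inverse M = 1 := Ring.mul_inverse_cancel M hMu
  have h2 : Ring.inverse M * M = 1 := Ring.inverse_mul_cancel M hMu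
  calc M * (Ring.inverse M * X * Ring.inverse M) * M
      = (M * Ring.inverse M) * X * (Ring.inverse M * M) := by noncomm_ring
    _ = X := by rw [h1, h2, one_mul, mul_one]

lemma inverse_antitone (hA : StrictlyPos A) (hB : StrictlyPos B) (h : Loewner A B) :
    Loewner (Ring.inverse B) (Ring.inverse A) := by
  have hBu := isUnit_of_strictlyPos hB
  have hAu := isUnit_of_strictlyPos hA
  have hb : StrictlyPos (Ring.inverse B) := inverse_strictlyPos hB
  set b := Ring.inverse B with hbdef
  obtain ⟨Sb, hSbpos, hSbsq⟩ := exists_posRoot hb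
  have hSbsa := hSbpos.isSelfAdjoint
  have hSbu : IsUnit Sb := root_isUnit hSbpos hSbsq (isUnit_of_strictlyPos hb)
  have hBb : B * b = 1 := Ring.mul_inverse_cancel B hBu
  have hbB : b * B = 1 := Ring.inverse_mul_cancel B hBu
  have hSbb : Sb * b = b * Sb := by rw [← hSbsq, mul_assoc]
  have hSbB : Sb * B = B * Sb := commute_inv_of_commute hSbb hBb hbB
  have hSbBSb : Sb * B * Sb = 1 := by rw [hSbB, mul_assoc, hSbsq, hBb]
  set V := Sb * A * Sb with hVdef
  have hVsp : StrictlyPos V := conj_strictlyPos Sb hSbsa hSbu hA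
  have hV1 : Loewner V 1 := by
    have := loewner_conj Sb hSbsa h
    rwa [hSbBSb] at this
  have h1W := one_le_inverse hVsp hV1
  have hconj := loewner_conj Sb hSbsa h1W
  have e1 : Sb * 1 * Sb = b := by rw [mul_one, hSbsq]
  have e2 : Sb * Ring.inverse V * Sb = Ring.inverse A := by
    rw [hVdef, inverse_mul3 hSbu hAu]
    exact sandwich hSbu
  rw [e1, e2] at hconj
  exact hconj

lemma strictlyPos_add_smul' {δ : ℝ} (hB : StrictlyPos A) (hδ : 0 < δ) :
    StrictlyPos (A + δ • 1) := by
  obtain ⟨α, hα, hin⟩ := strict_inner hB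
  have hsa : IsSelfAdjoint (A + δ • (1 : E →L[ℝ] E)) := hB.1.add (sa_smul_one δ)
  refine strictlyPos_of_inner hsa (α := α + δ) (by linarith) fun x => ?_
  have e : ⟪(A + δ • (1 : E →L[ℝ] E)) x, x⟫ = ⟪A x, x⟫ + δ * ‖x‖ ^ 2 := by
    rw [ContinuousLinearMap.add_apply, inner_add_left, ContinuousLinearMap.smul_apply,
      ContinuousLinearMap.one_apply, real_inner_smul_left, real_inner_self_eq_norm_sq]
  rw [e]
  have := hin x
  nlinarith [sq_nonneg ‖x‖]

section TwoSpace

variable {L : H →L[ℝ] G}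

lemma L_adj_apply (hL : adjoint L ∘L L = 1) (x : H) : adjoint L (L x) = x := by
  calc adjoint L (L x) = (adjoint L ∘L L) x := rfl
    _ = x := by rw [hL]; rfl

lemma inner_L (hL : adjoint L ∘L L = 1) (x y : H) : ⟪L x, L y⟫ = ⟪x, y⟫ := by
  rw [← ContinuousLinearMap.adjoint_inner_left, L_adj_apply hL]

lemma norm_L (hL : adjoint L ∘L L = 1) (x : H) : ‖L x‖ = ‖x‖ := by
  have h1 : ‖L x‖ ^ 2 = ‖x‖ ^ 2 := by
    rw [← real_inner_self_eq_norm_sq, ← real_inner_self_eq_norm_sq]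
    exact inner_L hL x x
  calc ‖L x‖ = Real.sqrt (‖L x‖ ^ 2) := (Real.sqrt_sq (norm_nonneg _)).symm
    _ = Real.sqrt (‖x‖ ^ 2) := by rw [h1]
    _ = ‖x‖ := Real.sqrt_sq (norm_nonneg _)

lemma conjL_apply (C : G →L[ℝ] G) (x : H) :
    (adjoint L ∘L C ∘L L) x = adjoint L (C (L x)) := rfl

lemma conjL_inner (C : G →L[ℝ] G) (x : H) :
    ⟪(adjoint L ∘L C ∘L L) x, x⟫ = ⟪C (L x), L x⟫ := by
  rw [conjL_apply, ContinuousLinearMap.adjoint_inner_left]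

lemma conjL_sa (C : G →L[ℝ] G) (hC : IsSelfAdjoint C) :
    IsSelfAdjoint (adjoint L ∘L C ∘L L) := by
  rw [ContinuousLinearMap.isSelfAdjoint_iff'] at hC ⊢
  rw [ContinuousLinearMap.adjoint_comp, ContinuousLinearMap.adjoint_comp,
    ContinuousLinearMap.adjoint_adjoint, hC]
  exact ContinuousLinearMap.ext fun x => rfl

lemma conjL_strictlyPos (hL : adjoint L ∘L L = 1) (C : G →L[ℝ] G) (hC : StrictlyPos C) :
    StrictlyPos (adjoint L ∘L C ∘L L) := by
  obtain ⟨α, hα, hin⟩ := strict_inner hC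
  refine strictlyPos_of_inner (conjL_sa C hC.1) hα fun x => ?_
  rw [conjL_inner]
  calc α * ‖x‖ ^ 2 = α * ‖L x‖ ^ 2 := by rw [norm_L hL]
    _ ≤ ⟪C (L x), L x⟫ := hin (L x)

lemma key_cs (hL : adjoint L ∘L L = 1) (C : G →L[ℝ] G) (hC : StrictlyPos C) :
    Loewner (Ring.inverse (adjoint L ∘L C ∘L L)) (adjoint L ∘L Ring.inverse C ∘L L) := by
  set c := Ring.inverse C with hc
  have hcs : StrictlyPos c := inverse_strictlyPos hC
  set P := adjoint L ∘L C ∘L L with hP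
  set R := adjoint L ∘L c ∘L L with hR
  have hPs : StrictlyPos P := conjL_strictlyPos hL C hC
  have hRs : StrictlyPos R := conjL_strictlyPos hL c hcs
  have hbPs : StrictlyPos (Ring.inverse P) := inverse_strictlyPos hPs
  set bP := Ring.inverse P with hbP
  have hPu : IsUnit P := isUnit_of_strictlyPos hPs
  have hPbx : ∀ x, P (bP x) = x := fun x => by
    calc P (bP x) = (P * bP) x := rfl
      _ = x := by rw [Ring.mul_inverse_cancel P hPu]; rfl
  have hCc : ∀ y, C (c y) = y := fun y => by
    calc C (c y) = (C * c) y := rfl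
      _ = y := by rw [Ring.mul_inverse_cancel C (isUnit_of_strictlyPos hC)]; rfl
  refine loewner_of hbPs.1 hRs.1 fun x => ?_
  set a := ⟪bP x, x⟫ with hax
  have h1 : ⟪C (L (bP x)), c (L x)⟫ = a := by
    rw [symm_inner hC.1, hCc, inner_L hL]
  have h2 : ⟪C (L (bP x)), L (bP x)⟫ = a := by
    have := conjL_inner (L := L) C (bP x)
    rw [← hP] at this
    rw [← this, hPbx, real_inner_comm]
  have h3 : ⟪C (c (L x)), c (L x)⟫ = ⟪R x, x⟫ := by
    rw [hCc, real_inner_comm, ← conjL_inner (L := L) c x, ← hR]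
  have hcs2 := cs (strictlyPos_isPositive hC) (L (bP x)) (c (L x))
  rw [h1, h2, h3] at hcs2
  have ha : 0 ≤ a := ((isPositive_iff' _).mp (strictlyPos_isPositive hbPs)).2 x
  have hRx : 0 ≤ ⟪R x, x⟫ := ((isPositive_iff' _).mp (strictlyPos_isPositive hRs)).2 x
  rcases eq_or_lt_of_le ha with h0 | h0
  · rw [← h0]; exact hRx
  · nlinarith

lemma rcc_eq (hL : adjoint L ∘L L = 1) (B : G →L[ℝ] G) (hB : StrictlyPos B)
    (γ : ℝ) (hγ : 0 < γ) :
    rcc L γ B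
      = Ring.inverse (adjoint L ∘L (Ring.inverse (B + γ⁻¹ • (1 : G →L[ℝ] G))) ∘L L)
        - γ⁻¹ • (1 : H →L[ℝ] H) := by
  have hγne : γ ≠ 0 := ne_of_gt hγ
  have hγinv : (0:ℝ) < γ⁻¹ := by positivity
  set C : G →L[ℝ] G := B + γ⁻¹ • (1 : G →L[ℝ] G) with hCdef
  have hCs : StrictlyPos C := strictlyPos_add_smul' hB hγinv
  have hBu : IsUnit B := isUnit_of_strictlyPos hB
  have hCu : IsUnit C := isUnit_of_strictlyPos hCs
  set b := Ring.inverse B with hbdef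
  set c := Ring.inverse C with hcdef
  have hbB : b * B = 1 := Ring.inverse_mul_cancel B hBu
  have hBb : B * b = 1 := Ring.mul_inverse_cancel B hBu
  have hcC : c * C = 1 := Ring.inverse_mul_cancel C hCu
  have hCc : C * c = 1 := Ring.mul_inverse_cancel C hCu
  set K : G →L[ℝ] G := 1 - γ⁻¹ • c with hKdef
  have hBC : B = C - γ⁻¹ • (1 : G →L[ℝ] G) := by rw [hCdef]; abel
  have hBc : B * c = K := by
    rw [hBC, sub_mul, hCc, smul_mul_assoc, one_mul, hKdef]
  have hcB : c * B = K := by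
    rw [hBC, mul_sub, hcC, mul_smul_comm, mul_one, hKdef]
  have i_bK : b * K = c := by rw [← hBc, ← mul_assoc, hbB, one_mul]
  have i_Kb : K * b = c := by rw [← hcB, mul_assoc, hBb, mul_one]
  set R : H →L[ℝ] H := adjoint L ∘L c ∘L L with hRdef
  have hRs : StrictlyPos R := conjL_strictlyPos hL c (inverse_strictlyPos hCs)
  have hRu : IsUnit R := isUnit_of_strictlyPos hRs
  set Q := Ring.inverse R with hQdef
  have hRQ : R * Q = 1 := Ring.mul_inverse_cancel R hRu
  have hQR : Q * R = 1 := Ring.inverse_mul_cancel R hRu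
  set Ep : G →L[ℝ] G := L ∘L adjoint L with hEdef
  set J : G →L[ℝ] G := L ∘L (Q ∘L adjoint L) with hJdef
  set W : H →L[ℝ] H := adjoint L ∘L (K ∘L L) with hWdef
  have m_W : W = 1 - γ⁻¹ • R := by
    rw [hWdef, hKdef, hRdef]
    ext x
    simp only [ContinuousLinearMap.coe_comp', Function.comp_apply,
      ContinuousLinearMap.sub_apply, ContinuousLinearMap.smul_apply,
      ContinuousLinearMap.one_apply, _root_.map_sub, _root_.map_smul]
    rw [L_adj_apply hL]
  have m2 : Ep * K * J = J - γ⁻¹ • Ep := by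
    have e : Ep * K * J = L ∘L ((W * Q) ∘L adjoint L) := by
      rw [hEdef, hJdef, hWdef]
      ext x; rfl
    have e2 : ((1 : H →L[ℝ] H) - γ⁻¹ • R) * Q = Q - γ⁻¹ • (1 : H →L[ℝ] H) := by
      rw [sub_mul, one_mul, smul_mul_assoc, hRQ]
    rw [e, m_W, e2]
    rw [hJdef, hEdef]
    ext x
    simp only [ContinuousLinearMap.coe_comp', Function.comp_apply,
      ContinuousLinearMap.sub_apply, ContinuousLinearMap.smul_apply,
      ContinuousLinearMap.one_apply, _root_.map_sub, _root_.map_smul]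
  set D : G →L[ℝ] G := b + γ • ((1 : G →L[ℝ] G) - Ep) with hDdef
  set Z : G →L[ℝ] G := γ⁻¹ • K + K * J * K with hZdef
  have hDK : D * K = c + γ • K - γ • (Ep * K) := by
    rw [hDdef, add_mul, smul_mul_assoc, sub_mul, one_mul, i_bK, smul_sub]
    abel
  have hKsum : γ⁻¹ • c + K = 1 := by rw [hKdef]; abel
  have s1 : D * (γ⁻¹ • K) = 1 - Ep * K := by
    rw [mul_smul_comm, hDK]
    have e : γ⁻¹ • (c + γ • K - γ • (Ep * K)) = (γ⁻¹ • c + K) - Ep * K := by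
      rw [smul_sub, smul_add, smul_smul, smul_smul, inv_mul_cancel₀ hγne, one_smul, one_smul]
    rw [e, hKsum]
  have m3 : c + γ • K = γ • (1 : G →L[ℝ] G) := by
    have e : γ • K = γ • (1 : G →L[ℝ] G) - c := by
      rw [hKdef, smul_sub, smul_smul, mul_inv_cancel₀ hγne, one_smul]
    rw [e]; abel
  have m2'' : γ • ((Ep * K) * (J * K)) = γ • (J * K) - Ep * K := by
    have e : (Ep * K) * (J * K) = (Ep * K * J) * K := by noncomm_ring
    rw [e, m2, sub_mul, smul_mul_assoc, smul_sub, smul_smul, mul_inv_cancel₀ hγne, one_smul]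
  have e1 : (c + γ • K) * (J * K) = γ • (J * K) := by
    rw [m3, smul_mul_assoc, one_mul]
  have s2 : D * (K * J * K) = Ep * K := by
    calc D * (K * J * K) = (D * K) * (J * K) := by noncomm_ring
      _ = (c + γ • K) * (J * K) - γ • ((Ep * K) * (J * K)) := by
          rw [hDK, sub_mul, smul_mul_assoc]
      _ = γ • (J * K) - (γ • (J * K) - Ep * K) := by rw [e1, m2'']
      _ = Ep * K := by abel
  have hDZ : D * Z = 1 := by
    rw [hZdef, mul_add, s1, s2]
    abel
  -- self-adjointness
  have hbsa : IsSelfAdjoint b := inverse_sa hB.1 hBu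
  have hcsa : IsSelfAdjoint c := inverse_sa hCs.1 hCu
  have hQsa : IsSelfAdjoint Q := inverse_sa hRs.1 hRu
  have hEsa : IsSelfAdjoint Ep := by
    rw [ContinuousLinearMap.isSelfAdjoint_iff', hEdef, ContinuousLinearMap.adjoint_comp,
      ContinuousLinearMap.adjoint_adjoint]
  have hKsa : IsSelfAdjoint K := by
    rw [hKdef, IsSelfAdjoint, star_sub, star_one, star_smul, star_trivial (γ⁻¹:ℝ), hcsa.star_eq]
  have hJsa : IsSelfAdjoint J := by
    rw [ContinuousLinearMap.isSelfAdjoint_iff', hJdef, ContinuousLinearMap.adjoint_comp,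
      ContinuousLinearMap.adjoint_comp, ContinuousLinearMap.adjoint_adjoint,
      ContinuousLinearMap.isSelfAdjoint_iff'.mp hQsa]
    exact ContinuousLinearMap.ext fun x => rfl
  have hDsa : IsSelfAdjoint D := by
    rw [hDdef, IsSelfAdjoint, star_add, star_smul, star_trivial (γ:ℝ), star_sub, star_one,
      hbsa.star_eq, hEsa.star_eq]
  have hZsa : IsSelfAdjoint Z := by
    rw [hZdef, IsSelfAdjoint, star_add, star_smul, star_trivial (γ⁻¹:ℝ), star_mul, star_mul,
      hKsa.star_eq, hJsa.star_eq, ← mul_assoc]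
  have hZD : Z * D = 1 := by
    have h := congrArg star hDZ
    rw [star_mul, hDsa.star_eq, hZsa.star_eq, star_one] at h
    exact h
  have hDinv : Ring.inverse D = Z := by
    have : D = ((⟨D, Z, hDZ, hZD⟩ : (G →L[ℝ] G)ˣ) : G →L[ℝ] G) := rfl
    rw [this, Ring.inverse_unit]
    rfl
  -- final computation
  have e4 : W * Q = Q - γ⁻¹ • (1 : H →L[ℝ] H) := by
    rw [m_W, sub_mul, one_mul, smul_mul_assoc, hRQ]
  have e5 : Q * W = Q - γ⁻¹ • (1 : H →L[ℝ] H) := by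
    rw [m_W, mul_sub, mul_one, mul_smul_comm, hQR]
  have e6 : W * Q * W = Q - γ⁻¹ • (1 : H →L[ℝ] H) - γ⁻¹ • W := by
    rw [e4, sub_mul, smul_mul_assoc, one_mul, e5]
  have efin : adjoint L ∘L (Z ∘L L) = Q - γ⁻¹ • (1 : H →L[ℝ] H) := by
    have d1 : adjoint L ∘L (Z ∘L L)
        = γ⁻¹ • W + adjoint L ∘L ((K * J * K) ∘L L) := by
      rw [hZdef, hWdef]
      ext x
      simp only [ContinuousLinearMap.coe_comp', Function.comp_apply,
        ContinuousLinearMap.add_apply, ContinuousLinearMap.smul_apply, _root_.map_add, _root_.map_smul]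
    have d2 : adjoint L ∘L ((K * J * K) ∘L L) = W * Q * W := by
      rw [hWdef, hJdef]
      ext x; rfl
    rw [d1, d2, e6]
    have : γ⁻¹ • W = γ⁻¹ • (1 : H →L[ℝ] H) - (γ⁻¹ * γ⁻¹) • R := by
      rw [m_W, smul_sub, smul_smul]
    rw [this]
    abel
  show adjoint L ∘L (Ring.inverse (Ring.inverse B + γ • (1 - L ∘L adjoint L))) ∘L L
      = Q - γ⁻¹ • (1 : H →L[ℝ] H)
  rw [← hbdef, ← hEdef, ← hDdef, hDinv]
  exact efin

theorem geom_interpolation_aux (L : H →L[ℝ] G) (hL : (adjoint L) ∘L L = 1)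
    (B : G →L[ℝ] G) (hB : StrictlyPos B) (γ : ℝ) (hγ : 0 < γ) :
    Loewner (rcc L γ B)
        (geomMean ((adjoint L) ∘L (B + γ⁻¹ • (1 : G →L[ℝ] G)) ∘L L)
          (Ring.inverse ((adjoint L) ∘L (Ring.inverse (B + γ⁻¹ • (1 : G →L[ℝ] G))) ∘L L))
          - γ⁻¹ • (1 : H →L[ℝ] H)) ∧
      Loewner
        (geomMean ((adjoint L) ∘L (B + γ⁻¹ • (1 : G →L[ℝ] G)) ∘L L)
          (Ring.inverse ((adjoint L) ∘L (Ring.inverse (B + γ⁻¹ • (1 : G →L[ℝ] G))) ∘L L))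
          - γ⁻¹ • (1 : H →L[ℝ] H))
        ((adjoint L) ∘L B ∘L L) := by
  have hγinv : (0:ℝ) < γ⁻¹ := by positivity
  set C : G →L[ℝ] G := B + γ⁻¹ • (1 : G →L[ℝ] G) with hCdef
  have hCs : StrictlyPos C := strictlyPos_add_smul' hB hγinv
  set P : H →L[ℝ] H := adjoint L ∘L C ∘L L with hPdef
  set R : H →L[ℝ] H := adjoint L ∘L (Ring.inverse C) ∘L L with hRdef
  set Q : H →L[ℝ] H := Ring.inverse R with hQdef
  have hPs : StrictlyPos P := conjL_strictlyPos hL C hCs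
  have hRs : StrictlyPos R := conjL_strictlyPos hL _ (inverse_strictlyPos hCs)
  have hQs : StrictlyPos Q := inverse_strictlyPos hRs
  have hPu : IsUnit P := isUnit_of_strictlyPos hPs
  have hPinvR : Loewner (Ring.inverse P) R := key_cs hL C hCs
  have hQP : Loewner Q P := by
    have h := inverse_antitone (inverse_strictlyPos hPs) hRs hPinvR
    have hinv2 : Ring.inverse (Ring.inverse P) = P := by
      obtain ⟨u, hu⟩ := hPu
      rw [← hu, Ring.inverse_unit, Ring.inverse_unit, inv_inv]
    rwa [hinv2] at h
  obtain ⟨hSPpos, hSPsq⟩ := opSqrt_spec (exists_posRoot hPs)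
  set SP := opSqrt P with hSPdef
  have hSPs : StrictlyPos SP := root_strictlyPos hPs hSPpos hSPsq
  have hSPu : IsUnit SP := root_isUnit hSPpos hSPsq hPu
  set iSP := Ring.inverse SP with hiSPdef
  have hiSPs : StrictlyPos iSP := inverse_strictlyPos hSPs
  have hiSPsa : IsSelfAdjoint iSP := hiSPs.1
  have hSPiSP : SP * iSP = 1 := Ring.mul_inverse_cancel _ hSPu
  have hiSPSP : iSP * SP = 1 := Ring.inverse_mul_cancel _ hSPu
  set T0 : H →L[ℝ] H := iSP * Q * iSP with hT0def
  have hT0s : StrictlyPos T0 :=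
    conj_strictlyPos iSP hiSPsa (isUnit_of_strictlyPos hiSPs) hQs
  have hT0le1 : Loewner T0 1 := by
    have h := loewner_conj iSP hiSPsa hQP
    have e : iSP * P * iSP = 1 := by
      calc iSP * P * iSP = (iSP * SP) * (SP * iSP) := by rw [← hSPsq]; noncomm_ring
        _ = 1 := by rw [hiSPSP, hSPiSP, one_mul]
    rwa [e] at h
  obtain ⟨hUpos, hUsq⟩ := opSqrt_spec (exists_posRoot hT0s)
  set U := opSqrt T0 with hUdef
  have hU1 : Loewner U 1 := root_le_one hUpos hUsq hT0le1 (strictlyPos_isPositive hT0s)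
  have hT0U : Loewner T0 U := le_root hUpos hUsq hU1
  have hMdef : geomMean P Q = SP * U * SP := rfl
  have hQM : Loewner Q (SP * U * SP) := by
    have h := loewner_conj SP hSPpos.isSelfAdjoint hT0U
    have e : SP * T0 * SP = Q := by
      calc SP * T0 * SP = (SP * iSP) * Q * (iSP * SP) := by rw [hT0def]; noncomm_ring
        _ = Q := by rw [hSPiSP, hiSPSP, one_mul, mul_one]
    rwa [e] at h
  have hMP : Loewner (SP * U * SP) P := by
    have h := loewner_conj SP hSPpos.isSelfAdjoint hU1
    have e : SP * 1 * SP = P := by rw [mul_one, hSPsq]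
    rwa [e] at h
  constructor
  · have hid := rcc_eq hL B hB γ hγ
    rw [hid]
    rw [Loewner]
    have e : (geomMean P Q - γ⁻¹ • (1 : H →L[ℝ] H)) - (Q - γ⁻¹ • (1 : H →L[ℝ] H))
        = (SP * U * SP) - Q := by
      rw [hMdef]; abel
    rw [e]
    exact hQM
  · have hLBL : adjoint L ∘L B ∘L L = P - γ⁻¹ • (1 : H →L[ℝ] H) := by
      rw [hPdef, hCdef]
      ext x
      simp only [ContinuousLinearMap.coe_comp', Function.comp_apply,
        ContinuousLinearMap.sub_apply, ContinuousLinearMap.add_apply,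
        ContinuousLinearMap.smul_apply, ContinuousLinearMap.one_apply, _root_.map_add, _root_.map_smul]
      rw [L_adj_apply hL]
      abel
    rw [Loewner, hLBL]
    have e : (P - γ⁻¹ • (1 : H →L[ℝ] H)) - (geomMean P Q - γ⁻¹ • (1 : H →L[ℝ] H))
        = P - (SP * U * SP) := by
      rw [hMdef]; abel
    rw [e]
    exact hMP

end TwoSpace

end GeomAux

open GeomAux in
theorem geom_interpolation (L : H →L[ℝ] G) (hL : (adjoint L) ∘L L = 1)
    (B : G →L[ℝ] G) (hB : StrictlyPos B) (γ : ℝ) (hγ : 0 < γ) :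
    Loewner (rcc L γ B)
        (geomMean ((adjoint L) ∘L (B + γ⁻¹ • (1 : G →L[ℝ] G)) ∘L L)
          (Ring.inverse ((adjoint L) ∘L (Ring.inverse (B + γ⁻¹ • (1 : G →L[ℝ] G))) ∘L L))
          - γ⁻¹ • (1 : H →L[ℝ] H)) ∧
      Loewner
        (geomMean ((adjoint L) ∘L (B + γ⁻¹ • (1 : G →L[ℝ] G)) ∘L L)
          (Ring.inverse ((adjoint L) ∘L (Ring.inverse (B + γ⁻¹ • (1 : G →L[ℝ] G))) ∘L L))
          - γ⁻¹ • (1 : H →L[ℝ] H))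
        ((adjoint L) ∘L B ∘L L) := by
  exact geom_interpolation_aux L hL B hB γ hγ

end
end
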